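/- The liminf of B at boundary points of the form (F, 0, 0, 0) is 0: for every F ≥ 0, liminf_{y → (F,0,0,0), y ∈ D} B(y) = 0. -/

import Mathlib

open Filter Topology

/-- The domain `D` of the Bellman function. -/
def bellmanDomain (p : ℝ) : Set (ℝ × ℝ × ℝ × ℝ) :=
  {x | 0 ≤ x.1 ∧ 0 ≤ x.2.1 ∧ 0 < x.2.2.1 ∧ 0 < x.2.2.2 ∧ x.2.2.1 ≤ x.2.2.2 ∧
    x.2.1 ^ p ≤ x.1 * x.2.2.2 ^ (p - 1)}

/-- The Bellman function `B`. -/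
noncomputable def bellmanB (p : ℝ) (x : ℝ × ℝ × ℝ × ℝ) : ℝ :=
  (p / (p - 1)) ^ p * x.1 - (p ^ p / (p - 1)) * x.2.1 ^ p / (x.2.2.1 + (p - 1) * x.2.2.2) ^ (p - 1)

lemma bellman_const_eq (p : ℝ) (hp : 1 < p) :
    (p / (p - 1)) ^ p = (p ^ p / (p - 1)) / (p - 1) ^ (p - 1) := by
  have h1 : (0:ℝ) < p - 1 := by linarith
  have hp0 : (0:ℝ) ≤ p := by linarith
  rw [Real.div_rpow hp0 h1.le, div_div]
  congr 1
  have h2 : (p - 1) ^ ((1:ℝ) + (p - 1)) = (p - 1) ^ (1:ℝ) * (p - 1) ^ (p - 1) :=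
    Real.rpow_add h1 1 (p - 1)
  rw [Real.rpow_one, show (1:ℝ) + (p - 1) = p by ring] at h2
  exact h2

lemma bellmanB_nonneg (p : ℝ) (hp : 1 < p) {x : ℝ × ℝ × ℝ × ℝ}
    (hx : x ∈ bellmanDomain p) : 0 ≤ bellmanB p x := by
  obtain ⟨hF, hf, hA, hv, hAv, hfp⟩ := hx
  obtain ⟨F, f, A, v⟩ := x
  simp only at hF hf hA hv hAv hfp
  have h1 : (0:ℝ) < p - 1 := by linarith
  have hp0 : (0:ℝ) < p := by linarith
  have hc : (0:ℝ) ≤ p ^ p / (p - 1) := by positivity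
  have hden2 : (0:ℝ) < ((p - 1) * v) ^ (p - 1) := by positivity
  have hdle : ((p - 1) * v) ^ (p - 1) ≤ (A + (p - 1) * v) ^ (p - 1) :=
    Real.rpow_le_rpow (by positivity) (by linarith) h1.le
  have key : (p ^ p / (p - 1)) * f ^ p / (A + (p - 1) * v) ^ (p - 1) ≤
      (p ^ p / (p - 1)) * (F * v ^ (p - 1)) / (((p - 1) * v) ^ (p - 1)) :=
    div_le_div₀ (by positivity) (mul_le_mul_of_nonneg_left hfp hc) hden2 hdle
  have hE : (p ^ p / (p - 1)) * (F * v ^ (p - 1)) / (((p - 1) * v) ^ (p - 1)) =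
      (p / (p - 1)) ^ p * F := by
    rw [Real.mul_rpow h1.le hv.le, bellman_const_eq p hp]
    have hvp : (0:ℝ) < v ^ (p - 1) := Real.rpow_pos_of_pos hv _
    have hpp : (0:ℝ) < (p - 1) ^ (p - 1) := Real.rpow_pos_of_pos h1 _
    field_simp
  rw [hE] at key
  simp only [bellmanB]
  linarith

theorem bellman_liminf_boundary (p : ℝ) (hp : 1 < p) (F : ℝ) (hF : 0 ≤ F) :
    Filter.liminf (bellmanB p)
      (𝓝[bellmanDomain p] ((F, 0, 0, 0) : ℝ × ℝ × ℝ × ℝ)) = 0 := by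
  have h1 : (0:ℝ) < p - 1 := by linarith
  have hp0 : (0:ℝ) < p := by linarith
  set x₀ : ℝ × ℝ × ℝ × ℝ := (F, 0, 0, 0) with hx₀
  set Φ : ℝ → ℝ × ℝ × ℝ × ℝ :=
    fun t => (F, F ^ (1/p) * t ^ ((p-1)/p), t * t, t) with hΦ
  have he1 : (F ^ (1/p)) ^ p = F := by
    rw [← Real.rpow_mul hF, one_div, inv_mul_cancel₀ hp0.ne', Real.rpow_one]
  have he2 : ∀ t : ℝ, 0 < t → (t ^ ((p-1)/p)) ^ p = t ^ (p-1) := fun t ht => by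
    rw [← Real.rpow_mul ht.le, div_mul_cancel₀ _ hp0.ne']
  have hfval : ∀ t : ℝ, 0 < t →
      (F ^ (1/p) * t ^ ((p-1)/p)) ^ p = F * t ^ (p-1) := fun t ht => by
    rw [Real.mul_rpow (Real.rpow_nonneg hF _) (Real.rpow_nonneg ht.le _), he1, he2 t ht]
  -- membership of the path in the domain
  have hmem : ∀ t ∈ Set.Ioc (0:ℝ) 1, Φ t ∈ bellmanDomain p := by
    rintro t ⟨ht, ht1⟩
    simp only [hΦ, bellmanDomain, Set.mem_setOf_eq]
    refine ⟨hF, by positivity, by positivity, ht, by nlinarith, ?_⟩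
    rw [hfval t ht]
  -- value of B along the path
  have hval : ∀ t ∈ Set.Ioc (0:ℝ) 1, bellmanB p (Φ t)
      = (p/(p-1))^p * F - (p ^ p / (p-1)) * F / (t + (p-1)) ^ (p-1) := by
    rintro t ⟨ht, ht1⟩
    have etp : (0:ℝ) < t ^ (p-1) := Real.rpow_pos_of_pos ht _
    have htp' : (0:ℝ) < (t + (p-1)) ^ (p-1) := Real.rpow_pos_of_pos (by linarith) _
    have ed : (t * t + (p-1) * t) = t * (t + (p-1)) := by ring
    simp only [bellmanB, hΦ]
    rw [hfval t ht, ed, Real.mul_rpow ht.le (by linarith)]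
    congr 1
    field_simp
  -- the limit of B along the path
  have hg : Tendsto (fun t : ℝ => (p/(p-1))^p * F - (p ^ p/(p-1)) * F / (t + (p-1)) ^ (p-1))
      (𝓝 0) (𝓝 0) := by
    have hcont : ContinuousAt (fun t : ℝ => (t + (p-1)) ^ (p-1)) 0 := by
      apply ContinuousAt.rpow_const (by fun_prop)
      left; simp; linarith
    have hden : Tendsto (fun t : ℝ => (t + (p-1)) ^ (p-1)) (𝓝 0) (𝓝 ((p-1) ^ (p-1))) := by
      have := hcont.tendsto
      simpa using this
    have hpp : ((p-1):ℝ) ^ (p-1) ≠ 0 := (Real.rpow_pos_of_pos h1 _).ne'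
    have h2 : Tendsto (fun t : ℝ => (p/(p-1))^p * F - (p ^ p/(p-1)) * F / (t + (p-1)) ^ (p-1))
        (𝓝 0) (𝓝 ((p/(p-1))^p * F - (p ^ p/(p-1)) * F / (p-1) ^ (p-1))) :=
      tendsto_const_nhds.sub (tendsto_const_nhds.div hden hpp)
    have hz : (p/(p-1))^p * F - (p ^ p/(p-1)) * F / (p-1) ^ (p-1) = 0 := by
      rw [bellman_const_eq p hp]; ring
    rwa [hz] at h2
  -- the path tends to x₀ within the domain
  have hΦt : Tendsto Φ (𝓝[>] (0:ℝ)) (𝓝 x₀) := by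
    refine Tendsto.mono_left ?_ nhdsWithin_le_nhds
    have h2 : Tendsto (fun t : ℝ => F ^ (1/p) * t ^ ((p-1)/p)) (𝓝 0) (𝓝 0) := by
      have hc : ContinuousAt (fun t : ℝ => t ^ ((p-1)/p)) 0 :=
        Real.continuousAt_rpow_const 0 _ (Or.inr (by positivity))
      have h3 := hc.tendsto.const_mul (F ^ (1/p))
      have hz : (0:ℝ) ^ ((p-1)/p) = 0 := Real.zero_rpow (by positivity)
      simpa [hz] using h3
    have h4 : Tendsto (fun t : ℝ => t * t) (𝓝 0) (𝓝 0) := by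
      have hcm : Continuous fun t : ℝ => t * t := continuous_id.mul continuous_id
      simpa using hcm.tendsto (0:ℝ)
    exact tendsto_const_nhds.prodMk_nhds (h2.prodMk_nhds (h4.prodMk_nhds tendsto_id))
  have hIoc : Set.Ioc (0:ℝ) 1 ∈ 𝓝[>] (0:ℝ) := Ioc_mem_nhdsGT_of_mem ⟨le_refl 0, zero_lt_one⟩
  have hev : ∀ᶠ t in 𝓝[>] (0:ℝ), Φ t ∈ bellmanDomain p := by
    filter_upwards [hIoc] with t ht using hmem t ht
  have hT : Tendsto Φ (𝓝[>] (0:ℝ)) (𝓝[bellmanDomain p] x₀) :=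
    tendsto_nhdsWithin_iff.mpr ⟨hΦt, hev⟩
  haveI hne : (𝓝[bellmanDomain p] x₀).NeBot :=
    mem_closure_iff_nhdsWithin_neBot.mp (mem_closure_of_tendsto hΦt hev)
  have hBΦ : Tendsto (bellmanB p ∘ Φ) (𝓝[>] (0:ℝ)) (𝓝 0) := by
    refine Tendsto.congr' ?_ (hg.mono_left nhdsWithin_le_nhds)
    filter_upwards [hIoc] with t ht
    exact (hval t ht).symm
  have hbdd : IsBoundedUnder (· ≥ ·) (𝓝[bellmanDomain p] x₀) (bellmanB p) :=
    isBoundedUnder_of_eventually_ge (a := 0)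
      (by filter_upwards [self_mem_nhdsWithin] with x hx using bellmanB_nonneg p hp hx)
  apply le_antisymm
  · have hcob : IsCoboundedUnder (· ≥ ·) (map Φ (𝓝[>] (0:ℝ))) (bellmanB p) := by
      refine isCoboundedUnder_ge_of_eventually_le _ (x := 1) ?_
      rw [eventually_map]
      filter_upwards [hBΦ.eventually_lt_const one_pos] with t ht using ht.le
    calc liminf (bellmanB p) (𝓝[bellmanDomain p] x₀)
        ≤ liminf (bellmanB p) (map Φ (𝓝[>] (0:ℝ))) :=
          liminf_le_liminf_of_le hT hbdd hcob
      _ = liminf (bellmanB p ∘ Φ) (𝓝[>] (0:ℝ)) := by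
          rw [Filter.liminf, Filter.liminf, Filter.map_map]
      _ = 0 := hBΦ.liminf_eq
  · refine le_liminf_of_le ?_ ?_
    · -- coboundedness: B is eventually bounded above near x₀
      apply Filter.IsBoundedUnder.isCoboundedUnder_ge
      refine isBoundedUnder_of_eventually_le (a := (p/(p-1))^p * (F+1)) ?_
      have hx1 : ∀ᶠ x : ℝ × ℝ × ℝ × ℝ in 𝓝 x₀, x.1 ≤ F + 1 := by
        have hcf : Tendsto (fun x : ℝ × ℝ × ℝ × ℝ => x.1) (𝓝 x₀) (𝓝 F) :=
          continuous_fst.tendsto x₀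
        exact hcf.eventually_le_const (by linarith)
      filter_upwards [self_mem_nhdsWithin, nhdsWithin_le_nhds hx1] with x hx hx1'
      obtain ⟨hxF, hxf, hxA, hxv, _, _⟩ := hx
      have hterm : 0 ≤ (p ^ p/(p-1)) * x.2.1 ^ p / (x.2.2.1 + (p-1) * x.2.2.2) ^ (p-1) := by
        have h5 : (0:ℝ) < x.2.2.1 + (p-1) * x.2.2.2 := by nlinarith
        have h6 : (0:ℝ) ≤ x.2.1 ^ p := Real.rpow_nonneg hxf _
        positivity
      have hb : bellmanB p x ≤ (p/(p-1))^p * x.1 := by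
        simp only [bellmanB]; linarith
      calc bellmanB p x ≤ (p/(p-1))^p * x.1 := hb
        _ ≤ (p/(p-1))^p * (F+1) := by
            apply mul_le_mul_of_nonneg_left hx1' (by positivity)
    · filter_upwards [self_mem_nhdsWithin] with x hx using bellmanB_nonneg p hp hx
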